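/- Let B ⊆ ℕ^m be a positive affine semigroup such that C(B) is generated by linearly independent elements e_1,…,e_d ∈ B, and let A be the submonoid of B generated by e_1,…,e_d. For x ∈ C(B) write x = Σ_{i=1}^d λ_i(x) e_i with λ_i(x) ∈ ℚ≥0. Then B is seminormal, i.e., every x ∈ G(B) with 2x ∈ B and 3x ∈ B satisfies x ∈ B, if and only if every x ∈ B_A satisfies λ_i(x) ≤ 1 for all i = 1,…,d. -/

import Mathlib

open scoped BigOperators

/-- The coordinatewise cast `ℕ^m → ℤ^m`. -/
def ntz {m : ℕ} (x : Fin m → ℕ) : Fin m → ℤ := fun i => (x i : ℤ)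

/-- The coordinatewise cast `ℕ^m → ℚ^m`. -/
def ntq {m : ℕ} (x : Fin m → ℕ) : Fin m → ℚ := fun i => (x i : ℚ)

/-- `G(S)`: the subgroup of `ℤ^m` generated by an affine semigroup `S ⊆ ℕ^m`. -/
def grp {m : ℕ} (S : AddSubmonoid (Fin m → ℕ)) : AddSubgroup (Fin m → ℤ) :=
  AddSubgroup.closure (ntz '' (S : Set (Fin m → ℕ)))

/-- `C(S)`: the cone in `ℚ^m` generated by `S`, i.e. all nonnegative rational
linear combinations of elements of `S`. -/
def cone {m : ℕ} (S : AddSubmonoid (Fin m → ℕ)) : Set (Fin m → ℚ) :=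
  {x | ∃ (n : ℕ) (c : Fin n → ℚ) (v : Fin n → Fin m → ℕ),
    (∀ i, 0 ≤ c i) ∧ (∀ i, v i ∈ S) ∧ x = ∑ i, c i • ntq (v i)}

/-- `B_A := {x ∈ B : x ∉ B + (A \ {0})}`. -/
def BA {m : ℕ} (A B : AddSubmonoid (Fin m → ℕ)) : Set (Fin m → ℕ) :=
  {x | x ∈ B ∧ ¬ ∃ b ∈ B, ∃ a ∈ A, a ≠ 0 ∧ x = b + a}

-- helper lemmas
lemma ntq_inj {m : ℕ} : Function.Injective (@ntq m) := by
  intro x y h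
  funext j
  have := congrFun h j
  simpa [ntq] using this

lemma ntq_add {m : ℕ} (x y : Fin m → ℕ) : ntq (x + y) = ntq x + ntq y := by
  funext j; simp [ntq]

lemma ntz_mem_grp {m : ℕ} {B : AddSubmonoid (Fin m → ℕ)} {b : Fin m → ℕ} (hb : b ∈ B) :
    ntz b ∈ grp B :=
  AddSubgroup.subset_closure ⟨b, hb, rfl⟩

lemma ntq_sum_smul {m d : ℕ} (k : Fin d → ℕ) (e : Fin d → Fin m → ℕ) :
    ntq (∑ j, k j • e j) = ∑ j, (k j : ℚ) • ntq (e j) := by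
  funext t
  simp only [ntq, Finset.sum_apply, Pi.smul_apply, smul_eq_mul]
  push_cast
  rfl

lemma sum_update_succ {M : Type*} [AddCommMonoid M] {d : ℕ} (k : Fin d → ℕ)
    (v : Fin d → M) (i : Fin d) :
    ∑ j, (Function.update k i (k i + 1)) j • v j = (∑ j, k j • v j) + v i := by
  classical
  rw [← Finset.add_sum_erase _ _ (Finset.mem_univ i),
      ← Finset.add_sum_erase Finset.univ (fun j => k j • v j) (Finset.mem_univ i)]
  have h1 : ∀ j ∈ Finset.univ.erase i,
      (Function.update k i (k i + 1)) j • v j = k j • v j := by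
    intro j hj
    rw [Function.update_of_ne (Finset.ne_of_mem_erase hj)]
  rw [Finset.sum_congr rfl h1, Function.update_self, add_smul, one_smul]
  abel

lemma rat_nat_mul (q : ℚ) (hq : 0 ≤ q) (N : ℕ) (h : q.den ∣ N) :
    ∃ c : ℕ, (c : ℚ) = N * q := by
  obtain ⟨t, ht⟩ := h
  have hnum : 0 ≤ q.num := Rat.num_nonneg.mpr hq
  refine ⟨q.num.toNat * t, ?_⟩
  have hne : (q.den : ℚ) ≠ 0 := by exact_mod_cast q.den_nz
  have hden : (q.den : ℚ) * q = q.num := by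
    rw [mul_comm, ← eq_div_iff hne]
    exact (Rat.num_div_den q).symm
  have hc : ((q.num.toNat : ℕ) : ℚ) = (q.num : ℚ) := by
    exact_mod_cast congrArg (fun z : ℤ => (z : ℚ)) (Int.toNat_of_nonneg hnum)
  push_cast
  rw [hc, ht]
  push_cast
  rw [mul_comm ((q.den : ℚ)) ((t : ℚ)), mul_assoc, hden, mul_comm]

lemma ntz_add {m : ℕ} (x y : Fin m → ℕ) : ntz (x + y) = ntz x + ntz y := by
  funext j; simp [ntz]

lemma ntz_nsmul {m : ℕ} (n : ℕ) (x : Fin m → ℕ) : ntz (n • x) = (n : ℤ) • ntz x := by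
  funext j
  simp [ntz, Pi.smul_apply, smul_eq_mul]

lemma ntq_nsmul {m : ℕ} (n : ℕ) (x : Fin m → ℕ) : ntq (n • x) = (n : ℚ) • ntq x := by
  funext j
  simp [ntq, Pi.smul_apply, smul_eq_mul]

lemma two_smul_int_vec {m : ℕ} (n : ℕ) (z : Fin m → ℤ) : n • z = (n : ℤ) • z :=
  (natCast_zsmul z n).symm

lemma seminormal_descent {m : ℕ} (B : AddSubmonoid (Fin m → ℕ))
    (hsemi : ∀ z : Fin m → ℤ, z ∈ grp B → (∃ b ∈ B, ntz b = 2 • z) →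
      (∃ b ∈ B, ntz b = 3 • z) → ∃ b ∈ B, ntz b = z)
    (z : Fin m → ℤ) (hz : z ∈ grp B) :
    ∀ t : ℕ, (∀ n : ℕ, t + 2 ≤ n → ∃ b ∈ B, ntz b = (n : ℤ) • z) →
      ∃ b ∈ B, ntz b = z := by
  have key : ∀ (w : Fin m → ℤ), w ∈ grp B → ∀ (a : ℕ),
      (∃ b ∈ B, ntz b = ((2 * a : ℕ) : ℤ) • w) → (∃ b ∈ B, ntz b = ((3 * a : ℕ) : ℤ) • w) →
      ∃ b ∈ B, ntz b = ((a : ℕ) : ℤ) • w := by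
    intro w hw a h2 h3
    have hmem : ((a : ℕ) : ℤ) • w ∈ grp B := AddSubgroup.zsmul_mem _ hw _
    apply hsemi _ hmem
    · obtain ⟨b, hb, hbz⟩ := h2
      refine ⟨b, hb, ?_⟩
      rw [hbz, two_smul_int_vec, smul_smul]
      push_cast
      try ring_nf
    · obtain ⟨b, hb, hbz⟩ := h3
      refine ⟨b, hb, ?_⟩
      rw [hbz, two_smul_int_vec, smul_smul]
      push_cast
      try ring_nf
  intro t
  induction t with
  | zero =>
    intro h
    have h1 : ∃ b ∈ B, ntz b = ((1 : ℕ) : ℤ) • z := by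
      apply key z hz 1
      · exact h 2 le_rfl
      · exact h 3 (by omega)
    obtain ⟨b, hb, hbz⟩ := h1
    exact ⟨b, hb, by simpa using hbz⟩
  | succ t ih =>
    intro h
    apply ih
    intro n hn
    rcases Nat.lt_or_ge n (t + 3) with h1 | h2
    · have hn2 : n = t + 2 := by omega
      subst hn2
      apply key z hz (t + 2)
      · exact h (2 * (t + 2)) (by omega)
      · exact h (3 * (t + 2)) (by omega)
    · exact h n (by omega)


/-- Let `B ⊆ ℕ^m` be a positive affine semigroup such that `C(B)` is
generated by linearly independent `e₁,…,e_d ∈ B`, and let `A` be the submonoid of `B`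
generated by the `e_k`.  For `x ∈ C(B)` write `x = Σ_i λ_i(x) e_i` with
`λ_i(x) ∈ ℚ≥0`.  Then `B` is seminormal, i.e. every `x ∈ G(B)` with `2x ∈ B` and
`3x ∈ B` satisfies `x ∈ B`, if and only if every `x ∈ B_A` satisfies `λ_i(x) ≤ 1`
for all `i`. -/
theorem stmt15 {m d : ℕ} (B : AddSubmonoid (Fin m → ℕ)) (hBfg : B.FG)
    (e : Fin d → Fin m → ℕ) (he : ∀ k, e k ∈ B)
    (hli : LinearIndependent ℚ (fun k => ntq (e k)))
    (A : AddSubmonoid (Fin m → ℕ)) (hA : A = AddSubmonoid.closure (Set.range e))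
    (hcone : cone B = cone A)
    (lam : (Fin m → ℕ) → Fin d → ℚ)
    (hlam : ∀ x : Fin m → ℕ, ntq x ∈ cone B →
      (∀ i, 0 ≤ lam x i) ∧ ntq x = ∑ i, lam x i • ntq (e i)) :
    (∀ z : Fin m → ℤ, z ∈ grp B → (∃ b ∈ B, ntz b = 2 • z) → (∃ b ∈ B, ntz b = 3 • z) →
        ∃ b ∈ B, ntz b = z) ↔
      ∀ x ∈ BA A B, ∀ i, lam x i ≤ 1 := by
  classical
  have hconeB : ∀ b ∈ B, ntq b ∈ cone B := by
    intro b hb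
    have : ∃ (n : ℕ) (c : Fin n → ℚ) (v : Fin n → Fin m → ℕ),
        (∀ i, 0 ≤ c i) ∧ (∀ i, v i ∈ B) ∧ ntq b = ∑ i, c i • ntq (v i) := by
      refine ⟨1, fun _ => 1, fun _ => b, fun _ => zero_le_one, fun _ => hb, ?_⟩
      simp
    exact this
  have huniq : ∀ c c' : Fin d → ℚ,
      ∑ j, c j • ntq (e j) = ∑ j, c' j • ntq (e j) → c = c' := by
    intro c c' h
    have h0 : ∑ j, (c j - c' j) • ntq (e j) = 0 := by
      simp only [sub_smul, Finset.sum_sub_distrib, h, sub_self]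
    have h1 := Fintype.linearIndependent_iff.mp hli (fun j => c j - c' j) h0
    funext j
    have := h1 j
    linarith
  have hcoord : ∀ v : Fin m → ℕ, ntq v ∈ cone B → ∀ c : Fin d → ℚ,
      ntq v = ∑ j, c j • ntq (e j) → lam v = c := by
    intro v hv c hc
    exact huniq _ _ (((hlam v hv).2).symm.trans hc)
  have hAmem : ∀ k : Fin d → ℕ, (∑ j, k j • e j) ∈ A := by
    intro k
    rw [hA]
    exact AddSubmonoid.sum_mem _ fun j _ =>
      AddSubmonoid.nsmul_mem _ (AddSubmonoid.subset_closure (Set.mem_range_self j)) _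
  have hAsub : ∀ a ∈ A, a ∈ B := by
    have : AddSubmonoid.closure (Set.range e) ≤ B :=
      AddSubmonoid.closure_le.mpr (by rintro _ ⟨k, rfl⟩; exact he k)
    intro a ha
    exact this (hA ▸ ha)
  have hArep : ∀ a ∈ A, ∃ k : Fin d → ℕ, a = ∑ j, k j • e j := by
    intro a ha
    rw [hA] at ha
    induction ha using AddSubmonoid.closure_induction with
    | mem x hx =>
      obtain ⟨j0, rfl⟩ := hx
      refine ⟨fun j => if j = j0 then 1 else 0, ?_⟩
      rw [Finset.sum_eq_single j0]
      · simp
      · intro j _ hj; simp [hj]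
      · intro h; exact absurd (Finset.mem_univ j0) h
    | zero => exact ⟨0, by simp⟩
    | add x y hx hy ihx ihy =>
      obtain ⟨k1, rfl⟩ := ihx
      obtain ⟨k2, rfl⟩ := ihy
      refine ⟨k1 + k2, ?_⟩
      simp only [Pi.add_apply, add_smul, Finset.sum_add_distrib]
  have hextract : ∀ n (v : Fin m → ℕ), v ∈ B → (∑ j, v j) ≤ n →
      ∃ x, x ∈ BA A B ∧ ∃ k : Fin d → ℕ, v = x + ∑ j, k j • e j := by
    intro n
    induction n with
    | zero =>
      intro v hv hvn
      by_cases hvBA : v ∈ BA A B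
      · exact ⟨v, hvBA, 0, by simp⟩
      · exfalso
        have hdec : ∃ b ∈ B, ∃ a ∈ A, a ≠ 0 ∧ v = b + a := by
          by_contra hno
          exact hvBA ⟨hv, hno⟩
        obtain ⟨b, hb, a, ha, hane, hvba⟩ := hdec
        obtain ⟨j, hj⟩ := Function.ne_iff.mp hane
        have haj : a j ≠ 0 := by simpa using hj
        have h1 : a j ≤ ∑ t, a t :=
          Finset.single_le_sum (fun t _ => Nat.zero_le _) (Finset.mem_univ j)
        have h2 : ∑ t, v t = ∑ t, b t + ∑ t, a t := by
          rw [hvba]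
          exact Finset.sum_add_distrib
        omega
    | succ n ih =>
      intro v hv hvn
      by_cases hvBA : v ∈ BA A B
      · exact ⟨v, hvBA, 0, by simp⟩
      · have hdec : ∃ b ∈ B, ∃ a ∈ A, a ≠ 0 ∧ v = b + a := by
          by_contra hno
          exact hvBA ⟨hv, hno⟩
        obtain ⟨b, hb, a, ha, hane, hvba⟩ := hdec
        obtain ⟨j, hj⟩ := Function.ne_iff.mp hane
        have haj : a j ≠ 0 := by simpa using hj
        have h1 : a j ≤ ∑ t, a t :=
          Finset.single_le_sum (fun t _ => Nat.zero_le _) (Finset.mem_univ j)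
        have h2 : ∑ t, v t = ∑ t, b t + ∑ t, a t := by
          rw [hvba]
          exact Finset.sum_add_distrib
        have hbn : ∑ t, b t ≤ n := by omega
        obtain ⟨x, hx, k, hk⟩ := ih b hb hbn
        obtain ⟨ka, hka⟩ := hArep a ha
        refine ⟨x, hx, k + ka, ?_⟩
        rw [hvba, hk, hka]
        simp only [Pi.add_apply, add_smul, Finset.sum_add_distrib]
        abel
  constructor
  · -- seminormal → bound
    intro hsemi x hxBA i
    obtain ⟨hxB, hxno⟩ := hxBA
    by_contra hgt
    push_neg at hgt
    exfalso
    apply hxno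
    obtain ⟨hlnn, hldec⟩ := hlam x (hconeB x hxB)
    set N : ℕ := ∏ j, (lam x j).den with hN
    have hN1 : 1 ≤ N := by
      rw [hN]
      exact Nat.one_le_iff_ne_zero.mpr (Finset.prod_ne_zero_iff.mpr fun j _ => (lam x j).den_nz)
    have hcex : ∀ j, ∃ cj : ℕ, (cj : ℚ) = N * lam x j := by
      intro j
      exact rat_nat_mul _ (hlnn j) N (Finset.dvd_prod_of_mem _ (Finset.mem_univ j))
    choose c hcq using hcex
    have hsumc : ∑ j, (c j : ℚ) • ntq (e j) = (N : ℚ) • ntq x := by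
      rw [hldec, Finset.smul_sum]
      apply Finset.sum_congr rfl
      intro j _
      rw [hcq j, mul_smul]
    have hciN : N + 1 ≤ c i := by
      have h1 : (N : ℚ) * 1 < (N : ℚ) * lam x i := by
        apply mul_lt_mul_of_pos_left hgt
        exact_mod_cast hN1
      rw [mul_one, ← hcq i] at h1
      have : N < c i := by exact_mod_cast h1
      omega
    -- w = the vector N•x - N•e i, realized inside A
    set kw := Function.update c i (c i - N) with hkw
    set w := ∑ j, kw j • e j with hw
    have hwB : w ∈ B := hAsub _ (hAmem kw)
    have hwq : ntq w = (N : ℚ) • ntq x + (-(N : ℚ)) • ntq (e i) := by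
      rw [hw, ntq_sum_smul, ← hsumc]
      rw [← Finset.add_sum_erase _ (fun j => ((kw j : ℚ)) • ntq (e j)) (Finset.mem_univ i),
          ← Finset.add_sum_erase _ (fun j => ((c j : ℚ)) • ntq (e j)) (Finset.mem_univ i)]
      have heq : ∑ j ∈ Finset.univ.erase i, ((kw j : ℚ)) • ntq (e j) =
          ∑ j ∈ Finset.univ.erase i, ((c j : ℚ)) • ntq (e j) := by
        apply Finset.sum_congr rfl
        intro j hj
        rw [hkw, Function.update_of_ne (Finset.ne_of_mem_erase hj)]
      rw [heq]
      have hkwi : ((kw i : ℕ) : ℚ) = (c i : ℚ) - N := by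
        rw [hkw, Function.update_self]
        push_cast [Nat.cast_sub (show N ≤ c i by omega)]
        ring
      rw [hkwi, sub_smul, neg_smul]
      abel
    set z : Fin m → ℤ := ntz x - ntz (e i) with hzdef
    have hzg : z ∈ grp B :=
      AddSubgroup.sub_mem _ (ntz_mem_grp hxB) (ntz_mem_grp (he i))
    have hwz : ntz w = (N : ℤ) • z := by
      funext j
      have h := congrFun hwq j
      simp only [ntq, Pi.add_apply, Pi.smul_apply, smul_eq_mul] at h
      simp only [ntz, hzdef, Pi.smul_apply, Pi.sub_apply, smul_eq_mul]
      have : ((w j : ℕ) : ℚ) = ((N : ℤ) * ((x j : ℤ) - (e i j : ℤ)) : ℤ) := by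
        rw [h]; push_cast; ring
      exact_mod_cast this
    set ku := Function.update c i (c i - N - 1) with hku
    have hkuw : Function.update ku i (ku i + 1) = kw := by
      funext j
      by_cases hj : j = i
      · subst hj
        simp only [Function.update_self, hku, hkw]
        omega
      · simp only [Function.update_of_ne hj, hku, hkw]
    set u := ∑ j, ku j • e j with hu
    have huB : u ∈ B := hAsub _ (hAmem ku)
    have hwu : w = u + e i := by
      rw [hw, ← hkuw, sum_update_succ ku e i, hu]
    set v1 := u + x with hv1
    have hv1B : v1 ∈ B := B.add_mem huB hxB
    have hv1z : ntz v1 = ((N + 1 : ℕ) : ℤ) • z := by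
      have h1 : ntz w = ntz u + ntz (e i) := by rw [hwu, ntz_add]
      have h2 : ntz v1 = ntz u + ntz x := by rw [hv1, ntz_add]
      have h3 : ntz u = (N : ℤ) • z - ntz (e i) := by
        rw [← hwz, h1]; abel
      rw [h2, h3]
      have h4 : ((N + 1 : ℕ) : ℤ) • z = (N : ℤ) • z + z := by
        push_cast
        rw [add_smul, one_smul]
      rw [h4, hzdef]
      abel
    have hall : ∀ n : ℕ, N * N + 2 ≤ n → ∃ b ∈ B, ntz b = (n : ℤ) • z := by
      intro n hn
      set q := n / N with hq
      set r := n % N with hr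
      have hqr : N * q + r = n := Nat.div_add_mod n N
      have hrN : r < N := Nat.mod_lt _ (by omega)
      have hNq : N ≤ q := by
        rw [hq]
        rw [Nat.le_div_iff_mul_le (by omega)]
        omega
      have hrq : r ≤ q := by omega
      refine ⟨(q - r) • w + r • v1, B.add_mem (AddSubmonoid.nsmul_mem B hwB _)
        (AddSubmonoid.nsmul_mem B hv1B _), ?_⟩
      rw [ntz_add, ntz_nsmul, ntz_nsmul, hwz, hv1z, smul_smul, smul_smul]
      rw [← add_smul]
      congr 1
      obtain ⟨s, hs⟩ := Nat.le.dest hrq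
      have hqrs : q - r = s := by omega
      rw [hqrs]
      push_cast
      have : (n : ℤ) = N * (r + s) + r := by exact_mod_cast (hs ▸ hqr).symm
      rw [this]
      ring
    obtain ⟨b, hbB, hbz⟩ := seminormal_descent B hsemi z hzg (N * N) hall
    have heine : e i ≠ 0 := by
      intro h0
      apply hli.ne_zero i
      funext j
      simp [ntq, h0]
    refine ⟨b, hbB, e i, ?_, heine, ?_⟩
    · rw [hA]
      exact AddSubmonoid.subset_closure (Set.mem_range_self i)
    · funext j
      have h := congrFun hbz j
      simp only [ntz, hzdef, Pi.sub_apply] at h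
      simp only [Pi.add_apply]
      omega
  · -- bound → seminormal
    intro hbound z hz h2 h3
    obtain ⟨b2, hb2, hb2z⟩ := h2
    obtain ⟨b3, hb3, hb3z⟩ := h3
    have hznn : ∀ j, 0 ≤ z j := by
      intro j
      have h := congrFun hb2z j
      simp only [ntz, Pi.smul_apply] at h
      rw [nsmul_eq_mul] at h
      omega
    set y : Fin m → ℕ := fun j => (z j).toNat with hy
    have hntzy : ntz y = z := by
      funext j
      simp [ntz, hy, Int.toNat_of_nonneg (hznn j)]
    have hb2y : b2 = 2 • y := by
      funext j
      have h := congrFun hb2z j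
      simp only [ntz, Pi.smul_apply] at h
      rw [nsmul_eq_mul] at h
      have h2 : ((y j : ℕ) : ℤ) = z j := Int.toNat_of_nonneg (hznn j)
      simp only [Pi.smul_apply, smul_eq_mul]
      omega
    have hb3y : b3 = 3 • y := by
      funext j
      have h := congrFun hb3z j
      simp only [ntz, Pi.smul_apply] at h
      rw [nsmul_eq_mul] at h
      have h2 : ((y j : ℕ) : ℤ) = z j := Int.toNat_of_nonneg (hznn j)
      simp only [Pi.smul_apply, smul_eq_mul]
      omega
    have h2yB : (2 • y) ∈ B := hb2y ▸ hb2
    have h3yB : (3 • y) ∈ B := hb3y ▸ hb3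
    have hmul : ∀ n : ℕ, 2 ≤ n → (n • y) ∈ B := by
      intro n
      induction n using Nat.strong_induction_on with
      | _ n ih =>
        intro hn
        match n, hn with
        | 2, _ => exact h2yB
        | 3, _ => exact h3yB
        | (k+4), _ =>
          have h1 : (k + 4) • y = (k + 2) • y + 2 • y := by
            rw [← add_nsmul]
          rw [h1]
          exact B.add_mem (ih (k+2) (by omega) (by omega)) h2yB
    have hycone : ntq y ∈ cone B := by
      have : ∃ (n : ℕ) (c : Fin n → ℚ) (v : Fin n → Fin m → ℕ),
          (∀ i, 0 ≤ c i) ∧ (∀ i, v i ∈ B) ∧ ntq y = ∑ i, c i • ntq (v i) := by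
        refine ⟨1, fun _ => (2 : ℚ)⁻¹, fun _ => b2, fun _ => by norm_num, fun _ => hb2, ?_⟩
        rw [hb2y]
        funext j
        simp only [Finset.sum_const, Finset.card_univ, Fintype.card_fin, one_smul, ntq,
          Pi.smul_apply, smul_eq_mul]
        push_cast
        try ring
      exact this
    obtain ⟨hlnn, hldec⟩ := hlam y hycone
    set N : ℕ := ∏ j, (lam y j).den with hN
    have hN1 : 1 ≤ N := by
      rw [hN]
      exact Nat.one_le_iff_ne_zero.mpr (Finset.prod_ne_zero_iff.mpr fun j _ => (lam y j).den_nz)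
    have hcex : ∀ j, ∃ cj : ℕ, (cj : ℚ) = N * lam y j := by
      intro j
      exact rat_nat_mul _ (hlnn j) N (Finset.dvd_prod_of_mem _ (Finset.mem_univ j))
    choose c hcq using hcex
    have hsumc : ∑ j, (c j : ℚ) • ntq (e j) = (N : ℚ) • ntq y := by
      rw [hldec, Finset.smul_sum]
      apply Finset.sum_congr rfl
      intro j _
      rw [hcq j, mul_smul]
    -- the claim: can subtract e i when lam > 1
    have hclaim : ∀ v : Fin m → ℕ, v ∈ B → ∀ i : Fin d, 1 < lam v i →
        ∃ b ∈ B, v = b + e i := by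
      intro v hv i hvi
      obtain ⟨x, hxBA, k, hk⟩ := hextract (∑ j, v j) v hv le_rfl
      have hxB : x ∈ B := hxBA.1
      have hq : ntq v = ∑ j, (lam x j + (k j : ℚ)) • ntq (e j) := by
        rw [hk, ntq_add, ntq_sum_smul, (hlam x (hconeB x hxB)).2]
        simp only [add_smul, Finset.sum_add_distrib]
      have hlv : lam v = fun j => lam x j + (k j : ℚ) := hcoord v (hconeB v hv) _ hq
      have hki : 1 ≤ k i := by
        have hb1 := hbound x hxBA i
        have h3 : lam v i = lam x i + (k i : ℚ) := by rw [hlv]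
        by_contra hcon
        push_neg at hcon
        have h0 : k i = 0 := by omega
        rw [h0] at h3
        push_cast at h3
        linarith
      set k' := Function.update k i (k i - 1) with hk'
      have hkk : Function.update k' i (k' i + 1) = k := by
        funext j
        by_cases hj : j = i
        · subst hj
          simp only [Function.update_self, hk']
          omega
        · simp only [Function.update_of_ne hj, hk']
      refine ⟨x + ∑ j, k' j • e j, B.add_mem hxB (hAsub _ (hAmem k')), ?_⟩
      rw [hk, ← hkk, sum_update_succ k' e i]
      abel
    -- downward induction
    have hdown : ∀ t : ℕ, ∀ k : Fin d → ℕ, (∀ j, k j ≤ c j) → (∑ j, (c j - k j)) = t →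
        ∃ b ∈ B, ntq b = ntq y + ∑ j, (k j : ℚ) • ntq (e j) := by
      intro t
      induction t with
      | zero =>
        intro k hk hsum
        have hkc : k = c := by
          funext j
          have h0 : c j - k j = 0 := by
            by_contra hne0
            have h1 : 0 < ∑ j, (c j - k j) :=
              Finset.sum_pos' (fun t _ => Nat.zero_le _)
                ⟨j, Finset.mem_univ j, Nat.pos_of_ne_zero hne0⟩
            omega
          have := hk j
          omega
        subst hkc
        refine ⟨(N+1) • y, hmul (N+1) (by omega), ?_⟩
        rw [ntq_nsmul, hsumc]
        push_cast
        rw [add_smul, one_smul]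
        abel
      | succ t ih =>
        intro k hk hsum
        have hex : ∃ i, k i < c i := by
          by_contra hcon
          push_neg at hcon
          have : ∑ j, (c j - k j) = 0 :=
            Finset.sum_eq_zero fun j _ => by have := hcon j; omega
          omega
        obtain ⟨i, hi⟩ := hex
        set k2 := Function.update k i (k i + 1) with hk2
        have hk2le : ∀ j, k2 j ≤ c j := by
          intro j
          by_cases hj : j = i
          · subst hj; simp only [hk2, Function.update_self]; omega
          · simp only [hk2, Function.update_of_ne hj]; exact hk j
        have hsum2 : ∑ j, (c j - k2 j) = t := by
          have hsplit1 : ∑ j, (c j - k j) =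
              (c i - k i) + ∑ j ∈ Finset.univ.erase i, (c j - k j) :=
            (Finset.add_sum_erase _ _ (Finset.mem_univ i)).symm
          have hsplit2 : ∑ j, (c j - k2 j) =
              (c i - k2 i) + ∑ j ∈ Finset.univ.erase i, (c j - k2 j) :=
            (Finset.add_sum_erase _ _ (Finset.mem_univ i)).symm
          have heq : ∑ j ∈ Finset.univ.erase i, (c j - k2 j) =
              ∑ j ∈ Finset.univ.erase i, (c j - k j) := by
            apply Finset.sum_congr rfl
            intro j hj
            rw [hk2, Function.update_of_ne (Finset.ne_of_mem_erase hj)]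
          have hk2i : k2 i = k i + 1 := by simp [hk2]
          omega
        obtain ⟨b', hb'B, hb'q⟩ := ih k2 hk2le hsum2
        have hb'lam : lam b' = fun j => lam y j + (k2 j : ℚ) := by
          apply hcoord b' (hconeB b' hb'B)
          rw [hb'q, hldec]
          simp only [add_smul, Finset.sum_add_distrib]
        have hyi : 0 < lam y i := by
          have hc1 : (1 : ℚ) ≤ (c i : ℚ) := by exact_mod_cast (show 1 ≤ c i by omega)
          rw [hcq i] at hc1
          by_contra hcon
          push_neg at hcon
          have : lam y i = 0 := le_antisymm hcon (hlnn i)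
          rw [this, mul_zero] at hc1
          linarith
        have h1 : 1 < lam b' i := by
          rw [hb'lam]
          simp only [hk2, Function.update_self]
          push_cast
          have : (0 : ℚ) ≤ (k i : ℚ) := by positivity
          linarith
        obtain ⟨b, hbB, hb'e⟩ := hclaim b' hb'B i h1
        refine ⟨b, hbB, ?_⟩
        have hsum3 : ∑ j, ((k2 j : ℚ)) • ntq (e j) =
            (∑ j, (k j : ℚ) • ntq (e j)) + ntq (e i) := by
          have hgen := sum_update_succ k (fun j => ntq (e j)) i
          simp only [← Nat.cast_smul_eq_nsmul ℚ] at hgen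
          rw [← hk2] at hgen
          exact hgen
        have hbb : ntq b' = ntq b + ntq (e i) := by rw [hb'e, ntq_add]
        rw [hbb, hsum3] at hb'q
        have := add_right_cancel (hb'q.trans (by abel) : ntq b + ntq (e i) =
          (ntq y + ∑ j, (k j : ℚ) • ntq (e j)) + ntq (e i))
        exact this
    obtain ⟨b, hbB, hbq⟩ := hdown (∑ j, c j) 0 (fun j => Nat.zero_le _) (by simp)
    have hby : b = y := by
      apply ntq_inj
      rw [hbq]
      simp
    exact ⟨b, hbB, by rw [hby, hntzy]⟩
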